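/- Let n, m be natural numbers and let C : Fin m → Finset (Fin n) be a family of clauses over n variables such that every clause C j has exactly 3 elements and every variable i lies in exactly 3 clauses, i.e. |{j : i ∈ C j}| = 3. Define g : ℕ → ℕ by g 0 = 0, g 1 = 1, g 2 = 2, g 3 = 0, and for a routing b : Fin n → Fin m → Bool let t i := |{j : i ∈ C j ∧ b i j = true}|. Then the following are equivalent: (1) there exists an assignment π : Fin n → Bool such that every clause contains exactly one true variable, i.e. |{i ∈ C j : π i = true}| = 1 for every j; (2) there exists b : Fin n → Fin m → Bool such that for every clause j, |{i ∈ C j : b i j = true}| ≤ 1 and |{i ∈ C j : b i j = false}| ≤ 2, and moreover ∑_{i} ( g (t i) + g (3 − t i) ) = 0. -/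
import Mathlib


/-- The combinatorial core of the reduction from monotone cubic exact 1-in-3 SAT to System
Optimum Atomic Congestion on DAGs: a cubic monotone formula (every clause has exactly 3
variables, every variable is in exactly 3 clauses) has an exact 1-in-3 satisfying
assignment iff there is a routing `b` of the three agents of each variable respecting the
clause-side capacities (at most 1 through the true side, at most 2 through the false side)
of total cost `∑ i (g (t i) + g (3 - t i)) = 0`, where `t i` is the number of agents of
variable `i` routed through its true copy and `g` is the cost `x · ℓ(x)` of the variable
arcs (`g 0 = 0`, `g 1 = 1`, `g 2 = 2`, `g 3 = 0`). -/
theorem stmt_4 (n m : ℕ) (C : Fin m → Finset (Fin n))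
    (hC : ∀ j, (C j).card = 3)
    (hvar : ∀ i : Fin n, (Finset.univ.filter (fun j : Fin m => i ∈ C j)).card = 3)
    (g : ℕ → ℕ) (hg0 : g 0 = 0) (hg1 : g 1 = 1) (hg2 : g 2 = 2) (hg3 : g 3 = 0) :
    (∃ π : Fin n → Bool, ∀ j, ((C j).filter (fun i => π i = true)).card = 1) ↔
    (∃ b : Fin n → Fin m → Bool,
      (∀ j, ((C j).filter (fun i => b i j = true)).card ≤ 1) ∧
      (∀ j, ((C j).filter (fun i => b i j = false)).card ≤ 2) ∧
      ∑ i : Fin n,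
        (g ((Finset.univ.filter (fun j : Fin m => i ∈ C j ∧ b i j = true)).card) +
          g (3 - (Finset.univ.filter (fun j : Fin m => i ∈ C j ∧ b i j = true)).card)) = 0) := by
  constructor
  · rintro ⟨π, hπ⟩
    refine ⟨fun i _ => π i, fun j => (hπ j).le, fun j => ?_, ?_⟩
    · have hsplit := Finset.card_filter_add_card_filter_not
        (s := C j) (p := fun i => π i = true)
      have heq : ((C j).filter (fun i => π i = false)) =
          ((C j).filter (fun i => ¬ π i = true)) := by
        apply Finset.filter_congr
        intro i _
        simp
      rw [heq]
      rw [hπ j, hC j] at hsplit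
      omega
    · apply Finset.sum_eq_zero
      intro i _
      by_cases hpi : π i = true
      · have heq : (Finset.univ.filter (fun j : Fin m => i ∈ C j ∧ π i = true)) =
            (Finset.univ.filter (fun j : Fin m => i ∈ C j)) := by
          apply Finset.filter_congr
          intro j _
          simp [hpi]
        simp only [heq, hvar i]
        simp [hg3, hg0]
      · have heq : (Finset.univ.filter (fun j : Fin m => i ∈ C j ∧ π i = true)) = ∅ := by
          apply Finset.filter_false_of_mem
          intro j _
          simp [hpi]
        simp only [heq, Finset.card_empty]
        simp [hg3, hg0]
  · rintro ⟨b, h1, h2, hsum⟩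
    set t : Fin n → ℕ :=
      fun i => (Finset.univ.filter (fun j : Fin m => i ∈ C j ∧ b i j = true)).card with ht
    have hterm : ∀ i, g (t i) + g (3 - t i) = 0 := by
      intro i
      exact (Finset.sum_eq_zero_iff).mp hsum i (Finset.mem_univ i)
    have htle : ∀ i, t i ≤ 3 := by
      intro i
      rw [← hvar i]
      apply Finset.card_le_card
      intro j hj
      simp only [Finset.mem_filter] at hj ⊢
      exact ⟨hj.1, hj.2.1⟩
    have ht03 : ∀ i, t i = 0 ∨ t i = 3 := by
      intro i
      have h := hterm i
      have hle := htle i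
      have : t i = 0 ∨ t i = 1 ∨ t i = 2 ∨ t i = 3 := by omega
      rcases this with h' | h' | h' | h' <;> rw [h'] at h <;>
        simp [hg0, hg1, hg2, hg3] at h <;> omega
    have hkey : ∀ i j, i ∈ C j → (b i j = true ↔ t i = 3) := by
      intro i j hij
      constructor
      · intro hb
        rcases ht03 i with h0 | h3
        · exfalso
          have : j ∈ (Finset.univ.filter (fun j : Fin m => i ∈ C j ∧ b i j = true)) := by
            simp [hij, hb]
          have hpos : 0 < t i := Finset.card_pos.mpr ⟨j, this⟩
          omega
        · exact h3
      · intro h3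
        have hsub : (Finset.univ.filter (fun j : Fin m => i ∈ C j ∧ b i j = true)) ⊆
            (Finset.univ.filter (fun j : Fin m => i ∈ C j)) := by
          intro k hk
          simp only [Finset.mem_filter] at hk ⊢
          exact ⟨hk.1, hk.2.1⟩
        have heq := Finset.eq_of_subset_of_card_le hsub (by rw [hvar i]; exact h3.ge)
        have : j ∈ (Finset.univ.filter (fun j : Fin m => i ∈ C j ∧ b i j = true)) := by
          rw [heq]; simp [hij]
        simp only [Finset.mem_filter] at this
        exact this.2.2
    refine ⟨fun i => decide (t i = 3), fun j => ?_⟩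
    have heqT : ((C j).filter (fun i => decide (t i = 3) = true)) =
        ((C j).filter (fun i => b i j = true)) := by
      apply Finset.filter_congr
      intro i hi
      simp [decide_eq_true_iff, hkey i j hi]
    have heqF : ((C j).filter (fun i => ¬ b i j = true)) =
        ((C j).filter (fun i => b i j = false)) := by
      apply Finset.filter_congr
      intro i _
      simp
    have hsplit := Finset.card_filter_add_card_filter_not
      (s := C j) (p := fun i => b i j = true)
    rw [heqF, hC j] at hsplit
    have := h1 j
    have := h2 j
    rw [heqT]
    omega
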